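/- Let R be a differentiable convex function on a convex set S, and let x' ∈ int(S) and u ∈ S. If x minimizes y ↦ B_R(y‖x') over S, then B_R(u‖x') ≥ B_R(u‖x), i.e., the Bregman projection satisfies a generalized Pythagorean inequality. -/

import Mathlib

open InnerProductSpace Set Filter

lemma slope_tendsto_inner
    {E : Type*} [NormedAddCommGroup E] [InnerProductSpace ℝ E] [CompleteSpace E]
    {f : E → ℝ} {G x : E} (hf : HasGradientAt f G x) (v : E) :
    Tendsto (fun t : ℝ => (f (x + t • v) - f x) / t) (nhdsWithin 0 (Ioi 0))
      (nhds ⟪G, v⟫_ℝ) := by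
  have hline : HasDerivAt (fun t : ℝ => x + t • v) v 0 := by
    simpa using ((hasDerivAt_id (0:ℝ)).smul_const v).const_add x
  have hφ : HasDerivAt (fun t : ℝ => f (x + t • v)) ⟪G, v⟫_ℝ 0 := by
    have hf' : HasFDerivAt f ((toDual ℝ E) G) (x + (0:ℝ) • v) := by
      simpa using hf.hasFDerivAt
    have := hf'.comp_hasDerivAt 0 hline
    simp at this; exact this
  have h := hasDerivAt_iff_tendsto_slope.1 hφ
  have hmono : nhdsWithin (0:ℝ) (Ioi 0) ≤ nhdsWithin 0 {(0:ℝ)}ᶜ :=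
    nhdsWithin_mono _ (fun t ht => ne_of_gt ht)
  have h2 := h.mono_left hmono
  refine h2.congr' ?_
  filter_upwards [self_mem_nhdsWithin] with t ht
  simp [slope_def_field, div_eq_inv_mul]

theorem bregman_pythagorean
    {E : Type*} [NormedAddCommGroup E] [InnerProductSpace ℝ E] [CompleteSpace E]
    (s : Set E) (hconv : Convex ℝ s)
    (R : E → ℝ) (g : E → E)
    (hR : ConvexOn ℝ s R)
    (hg : ∀ x ∈ s, HasGradientAt R (g x) x)
    (B : E → E → ℝ)
    (hB : ∀ y x, B y x = R y - R x - ⟪g x, y - x⟫_ℝ)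
    (x' : E) (hx' : x' ∈ interior s) (u : E) (hu : u ∈ s)
    (x : E) (hx : x ∈ s) (hmin : ∀ y ∈ s, B x x' ≤ B y x') :
    B u x' ≥ B u x := by
  have hx's : x' ∈ s := interior_subset hx'
  -- points on segments are in s
  have hseg : ∀ a ∈ s, ∀ b ∈ s, ∀ t ∈ Ioo (0:ℝ) 1, a + t • (b - a) ∈ s := by
    intro a ha b hb t ht
    have : a + t • (b - a) = (1 - t) • a + t • b := by
      rw [smul_sub, sub_smul, one_smul]; abel
    rw [this]
    exact hconv ha hb (by linarith [ht.1, ht.2]) (le_of_lt ht.1) (by ring)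
  -- Fact 1: tangent inequality at x' : ⟪g x', x - x'⟫ ≤ R x - R x'
  have key1 : ⟪g x', x - x'⟫_ℝ ≤ R x - R x' := by
    have htend := slope_tendsto_inner (hg x' hx's) (x - x')
    refine le_of_tendsto htend ?_
    filter_upwards [Ioo_mem_nhdsGT_of_mem (by norm_num : (0:ℝ) ∈ Ico (0:ℝ) 1)]
      with t ht
    have hco : x' + t • (x - x') = (1 - t) • x' + t • x := by
      rw [smul_sub, sub_smul, one_smul]; abel
    have := hR.2 hx's hx (by linarith [ht.1, ht.2]) (le_of_lt ht.1) (by ring : (1 - t) + t = 1)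
    rw [← hco] at this
    simp only [smul_eq_mul] at this
    rw [div_le_iff₀ ht.1]
    nlinarith [ht.1]
  -- Fact 2: optimality : ⟪g x', u - x⟫ ≤ ⟪g x, u - x⟫
  have key2 : ⟪g x', u - x⟫_ℝ ≤ ⟪g x, u - x⟫_ℝ := by
    have htend := slope_tendsto_inner (hg x hx) (u - x)
    refine ge_of_tendsto htend ?_
    filter_upwards [Ioo_mem_nhdsGT_of_mem (by norm_num : (0:ℝ) ∈ Ico (0:ℝ) 1)]
      with t ht
    have hmem := hseg x hx u hu t ht
    have h1 := hmin _ hmem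
    rw [hB, hB] at h1
    have hinner : ⟪g x', x + t • (u - x) - x'⟫_ℝ
        = ⟪g x', x - x'⟫_ℝ + t * ⟪g x', u - x⟫_ℝ := by
      have : x + t • (u - x) - x' = (x - x') + t • (u - x) := by abel
      rw [this, inner_add_right, real_inner_smul_right]
    rw [hinner] at h1
    rw [le_div_iff₀ ht.1]
    nlinarith [ht.1]
  -- Fact 1 rearranged: B x x' ≥ 0; combine
  have hsplit : ⟪g x', u - x'⟫_ℝ = ⟪g x', u - x⟫_ℝ + ⟪g x', x - x'⟫_ℝ := by
    rw [← inner_add_right, sub_add_sub_cancel]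
  rw [hB, hB, hsplit]
  linarith
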